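/- arXiv:1402.2119 — 2 statements merged into one kernel-verified Lean document; each statement's English description precedes it below -/
import Mathlib

section
/- For every n ≥ 4 there exists a minimally two-connected graph on n vertices with exactly 2n−4 edges. -/
open scoped Classical

private def hubGraph (n : ℕ) : SimpleGraph (Fin n) where
  Adj u v := ((u : ℕ) < 2 ∧ 2 ≤ (v : ℕ)) ∨ ((v : ℕ) < 2 ∧ 2 ≤ (u : ℕ))
  symm := ⟨fun u v h => h.symm⟩
  loopless := ⟨fun v h => by rcases h with ⟨h1, h2⟩ | ⟨h1, h2⟩ <;> omega⟩

private lemma hubGraph_adj {n : ℕ} (u v : Fin n) :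
    (hubGraph n).Adj u v ↔
      ((u : ℕ) < 2 ∧ 2 ≤ (v : ℕ)) ∨ ((v : ℕ) < 2 ∧ 2 ≤ (u : ℕ)) := Iff.rfl

private lemma not_connected_of_isolated {V : Type*} (H : SimpleGraph V) (a b : V)
    (hab : a ≠ b) (hiso : ∀ w, ¬ H.Adj a w) : ¬ H.Connected := by
  intro hc
  obtain ⟨w⟩ := hc.preconnected a b
  cases w with
  | nil => exact hab rfl
  | cons h _ => exact hiso _ h

private lemma connected_of_forall_reachable {V : Type*} (H : SimpleGraph V) (b : V)
    (h : ∀ v, H.Reachable v b) : H.Connected := by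
  rw [SimpleGraph.connected_iff]
  exact ⟨fun u v => (h u).trans (h v).symm, ⟨b⟩⟩

/-- A graph is two-connected if it has at least 3 vertices, is connected, and
remains connected after deleting any single vertex (and its incident edges). -/
def TwoConnected {V : Type*} [Fintype V] (G : SimpleGraph V) : Prop :=
  3 ≤ Fintype.card V ∧ G.Connected ∧ ∀ v : V, (G.induce ({v}ᶜ : Set V)).Connected

/-- For every `n ≥ 4` there is a minimally two-connected graph on `n` vertices
with exactly `2n - 4` edges. -/
theorem exists_minimally_twoConnected (n : ℕ) (hn : 4 ≤ n) :
    ∃ G : SimpleGraph (Fin n), TwoConnected G ∧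
      Nat.card G.edgeSet = 2 * n - 4 ∧
      ∀ e ∈ G.edgeSet, ¬ TwoConnected (G.deleteEdges {e}) := by
  set G := hubGraph n with hG
  refine ⟨G, ⟨?_, ?_, ?_⟩, ?_, ?_⟩
  · -- card
    simpa using by omega
  · -- connected
    apply connected_of_forall_reachable G (⟨0, by omega⟩ : Fin n)
    intro v
    by_cases hv : 2 ≤ (v : ℕ)
    · exact SimpleGraph.Adj.reachable (by rw [hubGraph_adj]; right; exact ⟨by simp, hv⟩)
    · have a1 : G.Adj v ⟨2, by omega⟩ := by
        rw [hubGraph_adj]; left; exact ⟨by omega, by simp⟩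
      have a2 : G.Adj (⟨2, by omega⟩ : Fin n) ⟨0, by omega⟩ := by
        rw [hubGraph_adj]; right; exact ⟨by simp, by simp⟩
      exact a1.reachable.trans a2.reachable
  · -- vertex-deleted connectivity
    intro v
    by_cases hv : 2 ≤ (v : ℕ)
    · -- a leaf removed; base hub 0
      have h0 : (⟨0, by omega⟩ : Fin n) ∈ ({v}ᶜ : Set (Fin n)) := by
        simp only [Set.mem_compl_iff, Set.mem_singleton_iff]
        intro h; rw [← h] at hv; simp at hv
      set lv : ℕ := if (v : ℕ) = 2 then 3 else 2 with hlv
      have hl1 : lv < n := by rw [hlv]; split <;> omega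
      have hl2 : 2 ≤ lv ∧ lv ≠ (v : ℕ) := by rw [hlv]; split <;> omega
      have hl : (⟨lv, hl1⟩ : Fin n) ∈ ({v}ᶜ : Set (Fin n)) := by
        simp only [Set.mem_compl_iff, Set.mem_singleton_iff]
        intro h; exact hl2.2 (by rw [← h])
      apply connected_of_forall_reachable _ (⟨⟨0, by omega⟩, h0⟩)
      rintro ⟨w, hw⟩
      by_cases hw2 : 2 ≤ (w : ℕ)
      · have a1 : G.Adj w ⟨0, by omega⟩ := by
          rw [hubGraph_adj]; right; exact ⟨by simp, hw2⟩
        exact SimpleGraph.Adj.reachable a1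
      · have a1 : G.Adj w ⟨lv, hl1⟩ := by
          rw [hubGraph_adj]; left; exact ⟨by omega, hl2.1⟩
        have a2 : G.Adj (⟨lv, hl1⟩ : Fin n) ⟨0, by omega⟩ := by
          rw [hubGraph_adj]; right; exact ⟨by simp, hl2.1⟩
        have r1 : (G.induce ({v}ᶜ : Set (Fin n))).Adj ⟨w, hw⟩ ⟨⟨lv, hl1⟩, hl⟩ := a1
        have r2 : (G.induce ({v}ᶜ : Set (Fin n))).Adj ⟨⟨lv, hl1⟩, hl⟩ ⟨⟨0, by omega⟩, h0⟩ := a2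
        exact r1.reachable.trans r2.reachable
    · -- a hub removed; base the other hub
      have hcn : 1 - (v : ℕ) < n := by omega
      have hcmem : (⟨1 - (v : ℕ), hcn⟩ : Fin n) ∈ ({v}ᶜ : Set (Fin n)) := by
        simp only [Set.mem_compl_iff, Set.mem_singleton_iff]
        intro h
        have := congrArg Fin.val h
        simp at this
        omega
      apply connected_of_forall_reachable _ (⟨⟨1 - (v : ℕ), hcn⟩, hcmem⟩)
      rintro ⟨w, hw⟩
      by_cases hw2 : 2 ≤ (w : ℕ)
      · have a1 : G.Adj w ⟨1 - (v : ℕ), hcn⟩ := by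
          rw [hubGraph_adj]; right; exact ⟨by simp, hw2⟩
        exact SimpleGraph.Adj.reachable a1
      · have hwv : (w : ℕ) ≠ (v : ℕ) := by
          intro h
          exact hw (by simp only [Set.mem_singleton_iff]; exact Fin.ext h)
        have hweq : w = (⟨1 - (v : ℕ), hcn⟩ : Fin n) := Fin.ext (by simp; omega)
        rw [show (⟨w, hw⟩ : ({v}ᶜ : Set (Fin n))) = ⟨⟨1 - (v : ℕ), hcn⟩, hcmem⟩ from
          Subtype.ext hweq]
  · -- edge count
    have hf : G.edgeSet = Set.range (fun p : Fin 2 × Fin (n - 2) =>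
        s((⟨(p.1 : ℕ), by omega⟩ : Fin n), (⟨(p.2 : ℕ) + 2, by omega⟩ : Fin n))) := by
      ext e
      induction e using Sym2.ind with
      | _ u v =>
        rw [SimpleGraph.mem_edgeSet]
        constructor
        · intro h
          rw [hubGraph_adj] at h
          rcases h with ⟨h1, h2⟩ | ⟨h1, h2⟩
          · refine ⟨(⟨(u : ℕ), h1⟩, ⟨(v : ℕ) - 2, by omega⟩), ?_⟩
            exact congrArg₂ (fun a b => s(a, b)) (Fin.ext rfl)
              (Fin.ext (by simp only [Fin.val_mk]; omega))
          · refine ⟨(⟨(v : ℕ), h1⟩, ⟨(u : ℕ) - 2, by omega⟩), ?_⟩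
            exact (congrArg₂ (fun a b => s(a, b)) (Fin.ext rfl)
              (Fin.ext (by simp only [Fin.val_mk]; omega))).trans Sym2.eq_swap
        · rintro ⟨p, hp⟩
          have hadj : G.Adj ⟨(p.1 : ℕ), by omega⟩ ⟨(p.2 : ℕ) + 2, by omega⟩ := by
            rw [hubGraph_adj]; left; exact ⟨by simpa using p.1.isLt, by simp⟩
          have hmem : ((fun p : Fin 2 × Fin (n - 2) =>
              s((⟨(p.1 : ℕ), by omega⟩ : Fin n), (⟨(p.2 : ℕ) + 2, by omega⟩ : Fin n))) p)
              ∈ G.edgeSet := hadj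
          rw [hp, SimpleGraph.mem_edgeSet] at hmem
          exact hmem
    have hinj : Function.Injective (fun p : Fin 2 × Fin (n - 2) =>
        s((⟨(p.1 : ℕ), by omega⟩ : Fin n), (⟨(p.2 : ℕ) + 2, by omega⟩ : Fin n))) := by
      rintro ⟨a, b⟩ ⟨a', b'⟩ h
      simp only at h
      rw [Sym2.eq_iff] at h
      have ha := a.isLt; have ha' := a'.isLt
      have hb := b.isLt; have hb' := b'.isLt
      obtain ⟨h1, h2⟩ | ⟨h1, h2⟩ := h <;>
        [skip; skip] <;>
      · have e1 := congrArg Fin.val h1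
        have e2 := congrArg Fin.val h2
        simp only [Fin.val_mk] at e1 e2
        simp only [Prod.mk.injEq]
        constructor <;> (apply Fin.ext; omega)
    rw [hf, Nat.card_range_of_injective hinj]
    simp only [Nat.card_eq_fintype_card, Fintype.card_prod, Fintype.card_fin]
    omega
  · -- minimality
    intro e he
    induction e using Sym2.ind with
    | _ u v =>
      rw [SimpleGraph.mem_edgeSet, hubGraph_adj] at he
      have key : ∀ (a b : Fin n), (a : ℕ) < 2 → 2 ≤ (b : ℕ) →
          ¬ TwoConnected (G.deleteEdges {s(a, b)}) := by
        intro a b ha hb htc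
        have hcn : 1 - (a : ℕ) < n := by omega
        set c : Fin n := ⟨1 - (a : ℕ), hcn⟩ with hcdef
        have hbc : b ∈ ({c}ᶜ : Set (Fin n)) := by
          simp only [Set.mem_compl_iff, Set.mem_singleton_iff]
          intro h
          have := congrArg Fin.val h
          simp [hcdef] at this
          omega
        have hac : a ∈ ({c}ᶜ : Set (Fin n)) := by
          simp only [Set.mem_compl_iff, Set.mem_singleton_iff]
          intro h
          have := congrArg Fin.val h
          simp [hcdef] at this
          omega
        refine not_connected_of_isolated _ (⟨b, hbc⟩) (⟨a, hac⟩) ?_ ?_ (htc.2.2 c)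
        · intro h
          simp only [Subtype.mk.injEq] at h
          have := congrArg Fin.val h
          omega
        · rintro ⟨w, hw⟩ hadj
          have hadj' : (G.deleteEdges {s(a, b)}).Adj b w := hadj
          rw [SimpleGraph.deleteEdges_adj] at hadj'
          obtain ⟨hGadj, hne⟩ := hadj'
          rw [hubGraph_adj] at hGadj
          have hw2 : (w : ℕ) < 2 := by rcases hGadj with ⟨x1, x2⟩ | ⟨x1, x2⟩ <;> omega
          have hwc : (w : ℕ) ≠ 1 - (a : ℕ) := by
            intro h
            exact hw (by simp only [Set.mem_singleton_iff]; exact Fin.ext h)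
          have hwa : w = a := Fin.ext (by omega)
          apply hne
          rw [hwa, Sym2.eq_swap]
          rfl
      rcases he with ⟨h1, h2⟩ | ⟨h1, h2⟩
      · exact key u v h1 h2
      · rw [Sym2.eq_swap]
        exact key v u h1 h2
end

section
/- For the graphical matroid on [n]^(2) with lexicographic edge order, intersecting the Björner–Sokal matroid partition with the set of connected graphs yields: C[n] is the disjoint union over all spanning trees τ of [n] of the intervals [τ, R(τ)], where R(τ) is τ together with all its externally active edges. -/
open scoped Classical

/-- The smaller endpoint of an unordered pair. -/
def eMin {m : ℕ} (e : Sym2 (Fin m)) : Fin m :=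
  Sym2.lift ⟨fun a b => min a b, fun a b => min_comm a b⟩ e

/-- The larger endpoint of an unordered pair. -/
def eMax {m : ℕ} (e : Sym2 (Fin m)) : Fin m :=
  Sym2.lift ⟨fun a b => max a b, fun a b => max_comm a b⟩ e

/-- The lexicographic (strict) order on edges. -/
def edgeLt {m : ℕ} (e f : Sym2 (Fin m)) : Prop :=
  eMin e < eMin f ∨ (eMin e = eMin f ∧ eMax e < eMax f)

/-- The spanning subgraph `G^{>e}` of edges strictly greater than `e`. -/
def gtSubgraph {m : ℕ} (G : SimpleGraph (Fin m)) (e : Sym2 (Fin m)) :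
    SimpleGraph (Fin m) where
  Adj a b := G.Adj a b ∧ edgeLt e s(a, b)
  symm := ⟨fun a b hab => by
    refine ⟨hab.1.symm, ?_⟩
    have := hab.2
    rwa [Sym2.eq_swap] at this⟩
  loopless := ⟨fun a ha => G.loopless.irrefl a ha.1⟩

/-- An edge `e` is externally active for `τ` if the endpoints of `e` are
joined by a path using only edges of `τ` strictly greater than `e`. -/
def ExtActive {m : ℕ} (τ : SimpleGraph (Fin m)) (e : Sym2 (Fin m)) : Prop :=
  ∃ a b : Fin m, e = s(a, b) ∧ a ≠ b ∧ (gtSubgraph τ e).Reachable a b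

/-- `R(τ)`: the tree `τ` together with all of its externally active edges. -/
def bjornerSokalR {m : ℕ} (τ : SimpleGraph (Fin m)) : SimpleGraph (Fin m) :=
  τ ⊔ SimpleGraph.fromEdgeSet {e | ExtActive τ e}

open SimpleGraph

def key {m : ℕ} (e : Sym2 (Fin m)) : Lex (Fin m × Fin m) := toLex (eMin e, eMax e)

lemma edgeLt_iff {m : ℕ} (e f : Sym2 (Fin m)) : edgeLt e f ↔ key e < key f := by
  rw [key, key, Prod.Lex.lt_iff]; rfl

lemma key_inj {m : ℕ} {e f : Sym2 (Fin m)} (h : key e = key f) : e = f := by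
  induction e using Sym2.ind with | _ a b =>
  induction f using Sym2.ind with | _ c d =>
  have h' := toLex.injective h
  simp only [eMin, eMax, Sym2.lift_mk, Prod.mk.injEq] at h'
  have h1 : s(min a b, max a b) = s(min c d, max c d) := by rw [h'.1, h'.2]
  have e1 : ∀ (x y : Fin m), s(min x y, max x y) = s(x, y) := by
    intro x y
    rcases le_total x y with hxy | hxy
    · rw [min_eq_left hxy, max_eq_right hxy]
    · rw [min_eq_right hxy, max_eq_left hxy, Sym2.eq_swap]
  rwa [e1, e1] at h1

lemma edgeLt_irrefl {m : ℕ} (e : Sym2 (Fin m)) : ¬ edgeLt e e := by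
  rw [edgeLt_iff]; exact lt_irrefl _

lemma edgeLt_total {m : ℕ} {e f : Sym2 (Fin m)} (h : e ≠ f) : edgeLt e f ∨ edgeLt f e := by
  rw [edgeLt_iff, edgeLt_iff]
  rcases lt_trichotomy (key e) (key f) with h1 | h1 | h1
  · exact Or.inl h1
  · exact absurd (key_inj h1) h
  · exact Or.inr h1

lemma sym2_exists_rep {α : Type*} (e : Sym2 α) : ∃ a b, e = s(a, b) :=
  Sym2.ind (fun a b => ⟨a, b, rfl⟩) e

section walkLemmas
variable {V : Type*}

lemma exists_crossing {G : SimpleGraph V} (P : V → Prop) {u v : V} (w : G.Walk u v)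
    (hu : P u) (hv : ¬ P v) :
    ∃ x y, G.Adj x y ∧ s(x, y) ∈ w.edges ∧ P x ∧ ¬ P y := by
  induction w with
  | nil => exact absurd hu hv
  | @cons a c b h p ih =>
    by_cases hc : P c
    · obtain ⟨x, y, hxy, hmem, hPx, hPy⟩ := ih hc hv
      exact ⟨x, y, hxy, by simp [hmem], hPx, hPy⟩
    · exact ⟨a, c, h, by simp, hu, hc⟩

lemma reachable_sdiff_of_walk {G H : SimpleGraph V} (hle : H ≤ G) {e : Sym2 V} {u v : V}
    (w : H.Walk u v) (he : e ∉ w.edges) : (G \ SimpleGraph.fromEdgeSet {e}).Reachable u v := by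
  induction w with
  | nil => exact Reachable.refl _
  | @cons a c b h p ih =>
    simp only [Walk.edges_cons, List.mem_cons, not_or] at he
    refine (Adj.reachable ?_).trans (ih he.2)
    simp only [sdiff_adj, fromEdgeSet_adj, Set.mem_singleton_iff]
    exact ⟨hle h, fun hh => he.1 hh.1.symm⟩

lemma no_detour {T H : SimpleGraph V} (hT : T.IsAcyclic) (hle : H ≤ T) {a b : V}
    (hadj : T.Adj a b) (he : s(a, b) ∉ H.edgeSet) (hr : H.Reachable a b) : False := by
  obtain ⟨w⟩ := hr
  set p := w.toPath with hp
  have hsub : ∀ f ∈ (p : H.Walk a b).edges, f ∈ T.edgeSet := fun f hf =>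
    edgeSet_mono hle ((p : H.Walk a b).edges_subset_edgeSet hf)
  have hqpath : ((p : H.Walk a b).transfer T hsub).IsPath := p.2.transfer _
  have huniq := (isAcyclic_iff_path_unique.mp hT)
    ⟨(p : H.Walk a b).transfer T hsub, hqpath⟩ (Path.singleton hadj)
  have hmem : s(a, b) ∈ ((p : H.Walk a b).transfer T hsub).edges := by
    have := congrArg (fun q : T.Path a b => (q : T.Walk a b).edges) huniq
    simp only [Path.singleton] at this
    rw [this]
    simp
  rw [Walk.edges_transfer] at hmem
  exact he ((p : H.Walk a b).edges_subset_edgeSet hmem)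

lemma reachable_delete_of_walk {G : SimpleGraph V} {a b : V}
    (hr : (G \ SimpleGraph.fromEdgeSet {s(a, b)}).Reachable a b) {u v : V} (w : G.Walk u v) :
    (G \ SimpleGraph.fromEdgeSet {s(a, b)}).Reachable u v := by
  induction w with
  | nil => exact Reachable.refl _
  | @cons x c y h p ih =>
    refine Reachable.trans ?_ ih
    by_cases hxc : s(x, c) = s(a, b)
    · rw [Sym2.eq_iff] at hxc
      rcases hxc with ⟨rfl, rfl⟩ | ⟨rfl, rfl⟩
      · exact hr
      · exact hr.symm
    · refine Adj.reachable ?_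
      simp only [sdiff_adj, fromEdgeSet_adj, Set.mem_singleton_iff]
      exact ⟨h, fun hh => hxc hh.1⟩

end walkLemmas

lemma gtSubgraph_le {m : ℕ} (τ : SimpleGraph (Fin m)) (e : Sym2 (Fin m)) :
    gtSubgraph τ e ≤ τ := fun _ _ h => h.1

lemma edgeLt_of_mem_gtSubgraph {m : ℕ} {τ : SimpleGraph (Fin m)} {e f : Sym2 (Fin m)}
    (hf : f ∈ (gtSubgraph τ e).edgeSet) : edgeLt e f := by
  induction f using Sym2.ind with | _ a b =>
  exact hf.2

lemma reachable_gtSubgraph_of_walk {m : ℕ} {τ : SimpleGraph (Fin m)} {e : Sym2 (Fin m)}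
    {u v : Fin m} (w : τ.Walk u v) (h : ∀ f ∈ w.edges, edgeLt e f) :
    (gtSubgraph τ e).Reachable u v := by
  induction w with
  | nil => exact Reachable.refl _
  | @cons a c b hadj p ih =>
    have hstep : (gtSubgraph τ e).Adj a c := ⟨hadj, h _ (by simp)⟩
    exact (Adj.reachable hstep).trans (ih fun f hf => h f (by simp [hf]))

lemma not_bridge_of_path {V : Type*} {G H : SimpleGraph V} (hle : H ≤ G) {a b : V}
    (hadj : G.Adj a b) (p : H.Path a b) (he : s(a, b) ∉ H.edgeSet) {f : Sym2 V}
    (hf : f ∈ (p : H.Walk a b).edges) : ¬ G.IsBridge f := by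
  have hsub : ∀ g ∈ (p : H.Walk a b).edges, g ∈ G.edgeSet := fun g hg =>
    edgeSet_mono hle ((p : H.Walk a b).edges_subset_edgeSet hg)
  have hqp : ((p : H.Walk a b).transfer G hsub).IsPath := p.2.transfer _
  have hnotmem : s(b, a) ∉ ((p : H.Walk a b).transfer G hsub).edges := by
    rw [Walk.edges_transfer, Sym2.eq_swap]
    intro hmem
    exact he ((p : H.Walk a b).edges_subset_edgeSet hmem)
  have hcyc : (Walk.cons hadj.symm ((p : H.Walk a b).transfer G hsub)).IsCycle :=
    Path.cons_isCycle ⟨(p : H.Walk a b).transfer G hsub, hqp⟩ hadj.symm hnotmem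
  intro hbr
  rw [isBridge_iff_mem_and_forall_cycle_notMem] at hbr
  refine hbr _ hcyc ?_
  rw [Walk.edges_cons]
  exact List.mem_cons_of_mem _ (by rwa [Walk.edges_transfer])
  exact hsub f hf

lemma main_aux {m : ℕ} : ∀ k : ℕ, ∀ G : SimpleGraph (Fin m), G.edgeSet.ncard = k →
    G.Connected → ∃! τ : SimpleGraph (Fin m), τ.IsTree ∧ τ ≤ G ∧ G ≤ bjornerSokalR τ := by
  intro k
  induction k using Nat.strong_induction_on with
  | _ k ih =>
  intro G hcard hG
  by_cases hac : G.IsAcyclic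
  · -- G is a tree
    refine ⟨G, ⟨⟨hG, hac⟩, le_refl _, le_sup_left⟩, ?_⟩
    rintro τ' ⟨ht', hle', hR'⟩
    refine le_antisymm hle' ?_
    intro x y hxy
    rcases hR' hxy with h | h
    · exact h
    rw [fromEdgeSet_adj] at h
    obtain ⟨hEA, -⟩ := h
    obtain ⟨x', y', hxy', hne', hr'⟩ := hEA
    exfalso
    have hGadj : G.Adj x' y' := by
      rw [← mem_edgeSet, ← hxy', mem_edgeSet]; exact hxy
    refine no_detour hac ((gtSubgraph_le τ' s(x, y)).trans hle') hGadj ?_ hr'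
    intro hmem
    have := edgeLt_of_mem_gtSubgraph hmem
    rw [← hxy'] at this
    exact edgeLt_irrefl _ this
  · -- G has a cycle; pick the minimal non-bridge edge
    have hne : (G.edgeFinset.filter (fun e => ¬ G.IsBridge e)).Nonempty := by
      rw [isAcyclic_iff_forall_edge_isBridge] at hac
      push_neg at hac
      obtain ⟨e, heG, henb⟩ := hac
      exact ⟨e, Finset.mem_filter.mpr ⟨mem_edgeFinset.mpr heG, henb⟩⟩
    obtain ⟨e₀, he₀S, hmin⟩ :=
      (G.edgeFinset.filter (fun e => ¬ G.IsBridge e)).exists_min_image key hne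
    have hminlt : ∀ f ∈ G.edgeSet, ¬ G.IsBridge f → ¬ edgeLt f e₀ := by
      intro f hfG hfnb hlt
      rw [edgeLt_iff] at hlt
      exact absurd hlt (not_lt.mpr (hmin f (Finset.mem_filter.mpr
        ⟨mem_edgeFinset.mpr hfG, hfnb⟩)))
    rw [Finset.mem_filter, mem_edgeFinset] at he₀S
    obtain ⟨he₀G, he₀nb⟩ := he₀S
    obtain ⟨a, b, rfl⟩ := sym2_exists_rep e₀
    have hab : G.Adj a b := G.mem_edgeSet.mp he₀G
    have hreach : (G \ SimpleGraph.fromEdgeSet {s(a, b)}).Reachable a b := by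
      rw [isBridge_iff] at he₀nb
      push_neg at he₀nb
      exact he₀nb
    set G' := G \ SimpleGraph.fromEdgeSet {s(a, b)} with hG'def
    have hG'le : G' ≤ G := sdiff_le
    have hG'adj : ∀ x y : Fin m, G'.Adj x y ↔ G.Adj x y ∧ s(x, y) ≠ s(a, b) := by
      intro x y
      rw [hG'def, sdiff_adj, fromEdgeSet_adj]
      constructor
      · rintro ⟨h1, h2⟩
        exact ⟨h1, fun hh => h2 ⟨hh, h1.ne⟩⟩
      · rintro ⟨h1, h2⟩
        exact ⟨h1, fun hh => h2 hh.1⟩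
    have hG'conn : G'.Connected := by
      have hnm : Nonempty (Fin m) := hG.nonempty
      refine Connected.mk ?_
      intro u v
      obtain ⟨w⟩ := hG.preconnected u v
      exact reachable_delete_of_walk hreach w
    have hG'card : G'.edgeSet.ncard < k := by
      rw [← hcard]
      apply Set.ncard_lt_ncard ?_ G.edgeSet.toFinite
      rw [Set.ssubset_iff_of_subset (edgeSet_mono hG'le)]
      refine ⟨s(a, b), he₀G, ?_⟩
      rw [mem_edgeSet, hG'adj]
      simp
    obtain ⟨τ, ⟨hτtree, hτle', hR'⟩, huniq⟩ := ih _ hG'card G' rfl hG'conn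
    have hτleG : τ ≤ G := hτle'.trans hG'le
    have hτe₀ : s(a, b) ∉ τ.edgeSet := by
      intro hmem
      have := edgeSet_mono hτle' hmem
      rw [mem_edgeSet, hG'adj] at this
      exact this.2 rfl
    -- e₀ is externally active for τ
    have hext : ExtActive τ s(a, b) := by
      obtain ⟨w⟩ := hτtree.isConnected.preconnected a b
      set p := w.toPath with hpdef
      have hedges : ∀ f ∈ (p : τ.Walk a b).edges, edgeLt s(a, b) f := by
        intro f hf
        have hfτ : f ∈ τ.edgeSet := (p : τ.Walk a b).edges_subset_edgeSet hf
        have hfne : f ≠ s(a, b) := fun hh => hτe₀ (hh ▸ hfτ)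
        have hfnb : ¬ G.IsBridge f := not_bridge_of_path hτleG hab p hτe₀ hf
        have hfG : f ∈ G.edgeSet := edgeSet_mono hτleG hfτ
        rcases edgeLt_total hfne with h | h
        · exact absurd h (hminlt f hfG hfnb)
        · exact h
      exact ⟨a, b, rfl, hab.ne, reachable_gtSubgraph_of_walk (p : τ.Walk a b) hedges⟩
    have hRG : G ≤ bjornerSokalR τ := by
      intro x y hxy
      by_cases hxye : s(x, y) = s(a, b)
      · right
        rw [fromEdgeSet_adj]
        exact ⟨by rw [Set.mem_setOf_eq, hxye]; exact hext, hxy.ne⟩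
      · exact hR' ((hG'adj x y).mpr ⟨hxy, hxye⟩)
    refine ⟨τ, ⟨hτtree, hτleG, hRG⟩, ?_⟩
    -- uniqueness
    rintro τ' ⟨ht', hle', hR2⟩
    have hτ'e₀ : ¬ τ'.Adj a b := by
      intro hadj'
      set P : Fin m → Prop := fun x => (τ' \ SimpleGraph.fromEdgeSet {s(a, b)}).Reachable a x
        with hPdef
      have hPa : P a := Reachable.refl _
      have hPb : ¬ P b := by
        intro hr
        refine no_detour ht'.IsAcyclic sdiff_le hadj' ?_ hr
        rw [mem_edgeSet, sdiff_adj, fromEdgeSet_adj]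
        push_neg
        intro _
        exact ⟨rfl, hadj'.ne⟩
      obtain ⟨w0⟩ := hreach
      set p0 := w0.toPath with hp0def
      obtain ⟨x, y, hxyadj, hxymem, hPx, hPy⟩ := exists_crossing P (p0 : G'.Walk a b) hPa hPb
      have hGxy : G.Adj x y := hG'le hxyadj
      have hfne : s(x, y) ≠ s(a, b) := ((hG'adj x y).mp hxyadj).2
      have hG'e₀ : s(a, b) ∉ G'.edgeSet := by
        rw [mem_edgeSet, hG'adj]; simp
      have hfnb : ¬ G.IsBridge s(x, y) := not_bridge_of_path hG'le hab p0 hG'e₀ hxymem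
      have hnlt : ¬ edgeLt s(x, y) s(a, b) := hminlt _ (G.mem_edgeSet.mpr hGxy) hfnb
      have hτ'xy : ¬ τ'.Adj x y := by
        intro hadj''
        refine hPy (hPx.trans (Adj.reachable ?_))
        rw [sdiff_adj, fromEdgeSet_adj]
        exact ⟨hadj'', fun hh => hfne hh.1⟩
      rcases hR2 hGxy with h | h
      · exact hτ'xy h
      rw [fromEdgeSet_adj] at h
      obtain ⟨⟨x', y', hxy', hne', hr'⟩, -⟩ := h
      obtain ⟨w'⟩ := hr'
      by_cases hmem : s(a, b) ∈ w'.edges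
      · have : edgeLt s(x, y) s(a, b) :=
          edgeLt_of_mem_gtSubgraph (w'.edges_subset_edgeSet hmem)
        exact hnlt this
      · have hr'' : (τ' \ SimpleGraph.fromEdgeSet {s(a, b)}).Reachable x' y' :=
          reachable_sdiff_of_walk (gtSubgraph_le τ' s(x, y)) w' hmem
        rw [Sym2.eq_iff] at hxy'
        rcases hxy' with ⟨rfl, rfl⟩ | ⟨rfl, rfl⟩
        · exact hPy (hPx.trans hr'')
        · exact hPy (hPx.trans hr''.symm)
    have hle'' : τ' ≤ G' := by
      intro x y h
      rw [hG'adj]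
      refine ⟨hle' h, fun hh => ?_⟩
      rw [Sym2.eq_iff] at hh
      rcases hh with ⟨rfl, rfl⟩ | ⟨rfl, rfl⟩
      · exact hτ'e₀ h
      · exact hτ'e₀ h.symm
    exact huniq τ' ⟨ht', hle'', hG'le.trans hR2⟩

/-- Intersecting the Björner–Sokal matroid partition with the connected
graphs: every connected graph `G` on `[n]` lies in the Boolean interval
`[τ, R(τ)]` for exactly one spanning tree `τ`. -/
theorem connected_partition (n : ℕ) (G : SimpleGraph (Fin n)) (hG : G.Connected) :
    ∃! τ : SimpleGraph (Fin n), τ.IsTree ∧ τ ≤ G ∧ G ≤ bjornerSokalR τ :=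
  main_aux G.edgeSet.ncard G rfl hG
end
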